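/- Let R be a skew-invertible Hecke symmetry and Ψ its skew-inverse, B = Tr₁Ψ. In the free algebra generated by symbols x_i and x̃^j, the permutation relations x̃^i x_j = δ_j^i + q⁻¹ x_k x̃^l (R⁻¹)_{jl}^{ik} map the ideal generated by the elements q x_i x_j − R_{ij}^{ab} x_a x_b into itself: explicitly, x̃^k (q x_i x_j − R_{ij}^{ab} x_a x_b) = q^{−2} (R⁻¹)_{js}^{rb} (R⁻¹)_{ir}^{ka} (q x_a x_b − R_{ab}^{cd} x_c x_d) x̃^s modulo the relations, so the permutation relations are compatible with the algebra structure of Sym_R(V). -/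
import Mathlib

open Matrix BigOperators

variable {K : Type*} [Field K]

def lift12 {N : ℕ} (A : Matrix (Fin N × Fin N) (Fin N × Fin N) K) :
    Matrix (Fin N × Fin N × Fin N) (Fin N × Fin N × Fin N) K :=
  Matrix.of fun p q => A (p.1, p.2.1) (q.1, q.2.1) * (if p.2.2 = q.2.2 then 1 else 0)

def lift23 {N : ℕ} (A : Matrix (Fin N × Fin N) (Fin N × Fin N) K) :
    Matrix (Fin N × Fin N × Fin N) (Fin N × Fin N × Fin N) K :=
  Matrix.of fun p q => (if p.1 = q.1 then 1 else 0) * A (p.2.1, p.2.2) (q.2.1, q.2.2)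

lemma sum_if_push {α M : Type*} [Fintype α] [AddCommMonoid M] (c : Prop) [Decidable c]
    (f : α → M) :
    (∑ b : α, if c then f b else 0) = if c then ∑ b : α, f b else 0 := by
  split_ifs <;> simp

lemma sum_rot3 {α M : Type*} [Fintype α] [AddCommMonoid M] (f : α → α → α → M) :
    (∑ a : α, ∑ b : α, ∑ c : α, f a b c) = ∑ c : α, ∑ a : α, ∑ b : α, f a b c := by
  calc (∑ a : α, ∑ b : α, ∑ c : α, f a b c)
      = ∑ a : α, ∑ c : α, ∑ b : α, f a b c :=
        Finset.sum_congr rfl fun a _ => Finset.sum_comm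
    _ = ∑ c : α, ∑ a : α, ∑ b : α, f a b c := Finset.sum_comm

lemma lift12_mul {N : ℕ} (A B : Matrix (Fin N × Fin N) (Fin N × Fin N) K) :
    lift12 (A * B) = lift12 A * lift12 B := by
  ext p q
  simp [lift12, Matrix.mul_apply, Fintype.sum_prod_type, mul_ite, ite_mul, mul_zero, zero_mul,
    Finset.sum_ite_eq, Finset.sum_ite_eq', Finset.mul_sum, Finset.sum_mul, mul_assoc]

lemma lift23_mul {N : ℕ} (A B : Matrix (Fin N × Fin N) (Fin N × Fin N) K) :
    lift23 (A * B) = lift23 A * lift23 B := by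
  ext p q
  simp [lift23, Matrix.mul_apply, Fintype.sum_prod_type, mul_ite, ite_mul, mul_zero, zero_mul,
    Finset.sum_ite_eq, Finset.sum_ite_eq', Finset.mul_sum, Finset.sum_mul, mul_assoc]

lemma lift12_one {N : ℕ} : lift12 (1 : Matrix (Fin N × Fin N) (Fin N × Fin N) K) = 1 := by
  ext p q
  simp only [lift12, Matrix.one_apply, Matrix.of_apply, Prod.ext_iff]
  split_ifs <;> simp_all

lemma lift23_one {N : ℕ} : lift23 (1 : Matrix (Fin N × Fin N) (Fin N × Fin N) K) = 1 := by
  ext p q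
  simp only [lift23, Matrix.one_apply, Matrix.of_apply, Prod.ext_iff]
  split_ifs <;> simp_all

/-- The mixed braid identity `R₁₂ S₂₃ S₁₂ = S₂₃ S₁₂ R₂₃` for `S = R⁻¹`. -/
lemma mixed_braid {N : ℕ} (R S : Matrix (Fin N × Fin N × Fin N) (Fin N × Fin N × Fin N) K)
    (R' S' : Matrix (Fin N × Fin N × Fin N) (Fin N × Fin N × Fin N) K)
    (hbraid : R * R' * R = R' * R * R')
    (h1 : R * S = 1) (h1' : S * R = 1) (h2 : R' * S' = 1) (h2' : S' * R' = 1) :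
    R * (S' * S) = S' * S * R' := by
  have cS1 : ∀ M, S * (R * M) = M := fun M => by rw [← mul_assoc, h1', one_mul]
  have cS2 : ∀ M, S' * (R' * M) = M := fun M => by rw [← mul_assoc, h2', one_mul]
  have cR1 : ∀ M, R * (S * M) = M := fun M => by rw [← mul_assoc, h1, one_mul]
  have cR2 : ∀ M, R' * (S' * M) = M := fun M => by rw [← mul_assoc, h2, one_mul]
  have c1 : (S * S' * S) * (R * R' * R) = 1 := by
    simp only [mul_assoc]
    rw [cS1, cS2, h1']
  have d2 : (R' * R * R') * (S' * S * S') = 1 := by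
    simp only [mul_assoc]
    rw [cR2, cR1, h2]
  have sbraid : S * S' * S = S' * S * S' := by
    calc S * S' * S = S * S' * S * ((R' * R * R') * (S' * S * S')) := by rw [d2, mul_one]
      _ = (S * S' * S * (R * R' * R)) * (S' * S * S') := by rw [← hbraid]; simp only [mul_assoc]
      _ = S' * S * S' := by rw [c1, one_mul]
  have e1 : S' * S = S * S' * S * R' := by
    rw [sbraid, mul_assoc, h2', mul_one]
  calc R * (S' * S) = R * (S * S' * S * R') := by rw [← e1]
    _ = (R * S) * (S' * (S * R')) := by simp only [mul_assoc]
    _ = S' * S * R' := by rw [h1, one_mul, mul_assoc]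

set_option maxHeartbeats 2000000 in
/-- for a Hecke symmetry R with R⁻¹ = R − (q−q⁻¹)I, the permutation
relations x̃^i x_j = δ_j^i + q⁻¹ x_k x̃^l (R⁻¹)_{jl}^{ik} are compatible with the
defining relations q x_i x_j = R_{ij}^{ab} x_a x_b of Sym_R(V): explicitly,
x̃^k (q x_i x_j − R_{ij}^{ab} x_a x_b)
= q⁻² (R⁻¹)_{js}^{rb} (R⁻¹)_{ir}^{ka} (q x_a x_b − R_{ab}^{cd} x_c x_d) x̃^s. -/
theorem permutation_relations_preserve_ideal {N : ℕ}
    {A : Type*} [Ring A] [Algebra K A]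
    (R : Matrix (Fin N × Fin N) (Fin N × Fin N) K) (q : K) (hq0 : q ≠ 0)
    (hbraid : lift12 R * lift23 R * lift12 R = lift23 R * lift12 R * lift23 R)
    (hHecke : R * R = (q - q⁻¹) • R + 1)
    (x xt : Fin N → A)
    (hperm : ∀ i j : Fin N,
      xt i * x j = (if i = j then (1 : A) else 0) +
        q⁻¹ • ∑ k : Fin N, ∑ l : Fin N,
          (R - (q - q⁻¹) • (1 : Matrix (Fin N × Fin N) (Fin N × Fin N) K)) (j, l) (i, k) •
            (x k * xt l)) :
    ∀ i j k : Fin N,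
      xt k * (q • (x i * x j) - ∑ a : Fin N, ∑ b : Fin N, R (i, j) (a, b) • (x a * x b)) =
        (q⁻¹ * q⁻¹) • ∑ r : Fin N, ∑ s : Fin N, ∑ a : Fin N, ∑ b : Fin N,
          ((R - (q - q⁻¹) • (1 : Matrix (Fin N × Fin N) (Fin N × Fin N) K)) (j, s) (r, b) *
            (R - (q - q⁻¹) • (1 : Matrix (Fin N × Fin N) (Fin N × Fin N) K)) (i, r) (k, a)) •
            ((q • (x a * x b) -
              ∑ c : Fin N, ∑ d : Fin N, R (a, b) (c, d) • (x c * x d)) * xt s) := by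
  intro i j k
  set S := R - (q - q⁻¹) • (1 : Matrix (Fin N × Fin N) (Fin N × Fin N) K) with hSdef
  have hq1 : q * q⁻¹ = 1 := mul_inv_cancel₀ hq0
  have hRS : R * S = 1 := by
    rw [hSdef, mul_sub, Matrix.mul_smul, mul_one, hHecke, add_sub_cancel_left]
  have hSR : S * R = 1 := by
    rw [hSdef, sub_mul, Matrix.smul_mul, one_mul, hHecke, add_sub_cancel_left]
  have h1RS : lift12 R * lift12 S = 1 := by rw [← lift12_mul, hRS, lift12_one]
  have h1SR : lift12 S * lift12 R = 1 := by rw [← lift12_mul, hSR, lift12_one]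
  have h2RS : lift23 R * lift23 S = 1 := by rw [← lift23_mul, hRS, lift23_one]
  have h2SR : lift23 S * lift23 R = 1 := by rw [← lift23_mul, hSR, lift23_one]
  have key : lift12 R * (lift23 S * lift12 S) = lift23 S * lift12 S * lift23 R :=
    mixed_braid (lift12 R) (lift12 S) (lift23 R) (lift23 S) hbraid h1RS h1SR h2RS h2SR
  have keyE : ∀ s m n : Fin N,
      (∑ a : Fin N, ∑ b : Fin N, R (i, j) (a, b) *
        ∑ l : Fin N, S (b, s) (l, n) * S (a, l) (k, m)) =
      ∑ a : Fin N, ∑ b : Fin N,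
        (∑ r : Fin N, S (j, s) (r, b) * S (i, r) (k, a)) * R (a, b) (m, n) := by
    intro s m n
    have h := congr_fun (congr_fun key (i, j, s)) (k, m, n)
    simpa only [Matrix.mul_apply, lift12, lift23, Matrix.of_apply, Fintype.sum_prod_type,
      mul_ite, ite_mul, mul_one, one_mul, mul_zero, zero_mul, sum_if_push, Finset.sum_ite_eq,
      Finset.sum_ite_eq', Finset.mem_univ, if_true] using h
  -- cubic expansion
  have cubic : ∀ a b : Fin N, xt k * (x a * x b) =
      ((if k = a then x b else 0) + q⁻¹ • ∑ m : Fin N, S (a, b) (k, m) • x m)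
      + (q⁻¹ * q⁻¹) • ∑ m : Fin N, ∑ n : Fin N, ∑ t : Fin N,
          (∑ l : Fin N, S (a, l) (k, m) * S (b, t) (l, n)) • (x m * (x n * xt t)) := by
    intro a b
    rw [← mul_assoc, hperm k a]
    simp only [add_mul, ite_mul, one_mul, zero_mul, smul_mul_assoc, Finset.sum_mul,
      mul_assoc, hperm, mul_add, Finset.mul_sum, mul_smul_comm, smul_add, Finset.smul_sum,
      smul_smul, mul_ite, mul_one, mul_zero, smul_ite, smul_zero, Finset.sum_add_distrib,
      Finset.sum_ite_eq', Finset.mem_univ, if_true]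
    rw [← add_assoc]
    congr 1
    simp only [Finset.sum_smul]
    refine Finset.sum_congr rfl fun m _ => ?_
    rw [Finset.sum_comm]
    refine Finset.sum_congr rfl fun n _ => ?_
    rw [Finset.sum_comm]
    refine Finset.sum_congr rfl fun t _ => Finset.sum_congr rfl fun l _ => ?_
    congr 1
    ring
  -- degree-one cancellation
  have hcancel : q • ((if k = i then x j else 0) + q⁻¹ • ∑ m : Fin N, S (i, j) (k, m) • x m)
      = ∑ a : Fin N, ∑ b : Fin N, R (i, j) (a, b) •
          ((if k = a then x b else 0) + q⁻¹ • ∑ m : Fin N, S (a, b) (k, m) • x m) := by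
    have hRSe : ∀ m : Fin N,
        (∑ a : Fin N, ∑ b : Fin N, R (i, j) (a, b) * S (a, b) (k, m)) =
          if i = k ∧ j = m then (1 : K) else 0 := by
      intro m
      have h := congr_fun (congr_fun hRS (i, j)) (k, m)
      simpa only [Matrix.mul_apply, Fintype.sum_prod_type, Matrix.one_apply, Prod.mk.injEq]
        using h
    have hSe : ∀ m : Fin N,
        S (i, j) (k, m) = R (i, j) (k, m) - (q - q⁻¹) * (if i = k ∧ j = m then 1 else 0) := by
      intro m
      rw [hSdef]
      simp [Matrix.one_apply, Prod.ext_iff]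
    simp only [smul_add, smul_smul, hq1, one_smul, smul_ite, smul_zero, Finset.smul_sum,
      Finset.sum_add_distrib, Finset.sum_ite_eq, Finset.mem_univ, if_true, hSe, sub_smul,
      ite_smul, zero_smul, mul_ite, mul_one, mul_zero, ite_and, Finset.sum_sub_distrib,
      Finset.sum_ite_eq']
    simp only [sum_if_push, Finset.sum_ite_eq, Finset.sum_ite_eq', Finset.mem_univ, if_true]
    have htriple : (∑ x1 : Fin N, ∑ x2 : Fin N, ∑ x3 : Fin N,
        (R (i, j) (x1, x2) * (q⁻¹ * S (x1, x2) (k, x3))) • x x3)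
        = if i = k then q⁻¹ • x j else 0 := by
      rw [sum_rot3]
      simp only [← Finset.sum_smul]
      calc (∑ x3 : Fin N, (∑ x1 : Fin N, ∑ x2 : Fin N,
              R (i, j) (x1, x2) * (q⁻¹ * S (x1, x2) (k, x3))) • x x3)
          = ∑ x3 : Fin N, (q⁻¹ * if i = k ∧ j = x3 then (1:K) else 0) • x x3 := by
            refine Finset.sum_congr rfl fun x3 _ => ?_
            congr 1
            rw [← hRSe x3, Finset.mul_sum]
            refine Finset.sum_congr rfl fun a _ => ?_
            rw [Finset.mul_sum]
            exact Finset.sum_congr rfl fun b _ => by ring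
        _ = if i = k then q⁻¹ • x j else 0 := by
            simp [mul_ite, mul_one, mul_zero, ite_and, ite_smul, zero_smul, sum_if_push,
              Finset.sum_ite_eq, Finset.sum_ite_eq']
    rw [htriple]
    by_cases hik : i = k
    · subst hik
      simp only [if_true]
      abel
    · have hki : ¬ k = i := fun h => hik h.symm
      simp [hik, hki]
  rw [mul_sub, mul_smul_comm]
  simp only [Finset.mul_sum, mul_smul_comm]
  simp only [cubic]
  simp only [smul_add, smul_smul, Finset.sum_add_distrib]
  have hcancel2 := hcancel
  simp only [smul_add, smul_smul, Finset.sum_add_distrib] at hcancel2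
  have habel : ∀ a1 a2 a3 b1 b2 b3 : A, a1 + a2 = b1 + b2 →
      a1 + a2 + a3 - (b1 + b2 + b3) = a3 - b3 := by
    intro a1 a2 a3 b1 b2 b3 h
    rw [← h]; abel
  rw [habel _ _ _ _ _ _ hcancel2]
  simp only [sub_mul, smul_mul_assoc, Finset.sum_mul, mul_assoc, smul_sub, smul_smul,
    Finset.smul_sum, Finset.sum_sub_distrib]
  refine congrArg₂ (· - · : A → A → A) ?_ ?_
  · -- P1 = Q1
    conv_rhs => rw [sum_rot3]
    conv_rhs => enter [2, m]; rw [sum_rot3]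
    conv_rhs => enter [2, m, 2, n]; rw [Finset.sum_comm]
    conv_rhs => enter [2, m, 2, n, 2, t]; rw [← Finset.sum_smul]
    refine Finset.sum_congr rfl fun m _ => Finset.sum_congr rfl fun n _ =>
      Finset.sum_congr rfl fun t _ => ?_
    congr 1
    simp only [Finset.mul_sum]
    exact Finset.sum_congr rfl fun l _ => by ring
  · -- P2 = Q2
    conv_lhs => rw [sum_rot3]
    conv_lhs => enter [2, m]; rw [sum_rot3]
    conv_lhs => enter [2, m, 2, n]; rw [sum_rot3]
    conv_lhs => enter [2, m, 2, n, 2, t, 2, a]; rw [← Finset.sum_smul]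
    conv_lhs => enter [2, m, 2, n, 2, t]; rw [← Finset.sum_smul]
    conv_rhs => rw [sum_rot3]
    conv_rhs => enter [2, a]; rw [sum_rot3]
    conv_rhs => enter [2, a, 2, b]; rw [sum_rot3]
    conv_rhs => enter [2, a, 2, b, 2, m]; rw [sum_rot3]
    conv_rhs => enter [2, a, 2, b, 2, m, 2, n]; rw [Finset.sum_comm]
    conv_rhs => rw [sum_rot3]
    conv_rhs => enter [2, m]; rw [sum_rot3]
    conv_rhs => enter [2, m, 2, n]; rw [sum_rot3]
    conv_rhs => enter [2, m, 2, n, 2, t, 2, a, 2, b]; rw [← Finset.sum_smul]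
    conv_rhs => enter [2, m, 2, n, 2, t, 2, a]; rw [← Finset.sum_smul]
    conv_rhs => enter [2, m, 2, n, 2, t]; rw [← Finset.sum_smul]
    refine Finset.sum_congr rfl fun m _ => Finset.sum_congr rfl fun n _ =>
      Finset.sum_congr rfl fun t _ => ?_
    congr 1
    calc (∑ a : Fin N, ∑ b : Fin N,
            R (i, j) (a, b) * (q⁻¹ * (q⁻¹ * ∑ l : Fin N, S (a, l) (k, m) * S (b, t) (l, n))))
        = ∑ a : Fin N, ∑ b : Fin N, (q⁻¹ * q⁻¹) *
            (R (i, j) (a, b) * ∑ l : Fin N, S (b, t) (l, n) * S (a, l) (k, m)) := by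
          refine Finset.sum_congr rfl fun a _ => Finset.sum_congr rfl fun b _ => ?_
          simp only [Finset.mul_sum]
          exact Finset.sum_congr rfl fun l _ => by ring
      _ = (q⁻¹ * q⁻¹) * ∑ a : Fin N, ∑ b : Fin N,
            R (i, j) (a, b) * ∑ l : Fin N, S (b, t) (l, n) * S (a, l) (k, m) := by
          simp only [Finset.mul_sum]
      _ = (q⁻¹ * q⁻¹) * ∑ a : Fin N, ∑ b : Fin N,
            (∑ r : Fin N, S (j, t) (r, b) * S (i, r) (k, a)) * R (a, b) (m, n) := by
          rw [keyE]
      _ = ∑ a : Fin N, ∑ b : Fin N, ∑ r : Fin N,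
            q⁻¹ * (q⁻¹ * (S (j, t) (r, b) * (S (i, r) (k, a) * R (a, b) (m, n)))) := by
          simp only [Finset.mul_sum, Finset.sum_mul]
          refine Finset.sum_congr rfl fun a _ => Finset.sum_congr rfl fun b _ =>
            Finset.sum_congr rfl fun r _ => by ring
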